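/- For distinct nonzero complex numbers t_1,...,t_n and s distinct from all t_i: sum over i of (product over j≠i of t_i/(t_i - t_j)) times (s/(s - t_i))^2 equals (1 + sum over j of t_j/(s - t_j)) times product over i of s/(s - t_i). -/

import Mathlib

open Finset Polynomial

lemma sum_prod_partial_fraction_base (n : ℕ) (hn : 0 < n) (t : Fin n → ℂ) (ht : ∀ i, t i ≠ 0)
    (hinj : Function.Injective t) (x : ℂ) (hx : ∀ i, x ≠ t i) :
    ∑ i, (∏ j ∈ univ.erase i, t i / (t i - t j)) * (x / (x - t i))
      = ∏ i, x / (x - t i) := by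
  classical
  set v : Fin (n+1) → ℂ := Fin.cons 0 t with hv
  have hvinj : Function.Injective v := by
    refine Fin.cons_injective_iff.2 ⟨?_, hinj⟩
    rintro ⟨i, hi⟩; exact ht i hi
  have hdeg : ((Polynomial.X : ℂ[X]) ^ n).degree < ((univ : Finset (Fin (n+1))).card : ℕ) := by
    rw [Polynomial.degree_X_pow, card_univ, Fintype.card_fin]
    exact_mod_cast Nat.lt_succ_self n
  have hkey := Lagrange.eq_interpolate (s := (univ : Finset (Fin (n+1)))) (v := v)
    (f := (Polynomial.X : ℂ[X]) ^ n) hvinj.injOn hdeg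
  have key : x ^ n = ∑ i : Fin (n+1), (v i)^n * ∏ j ∈ univ.erase i, ((v i - v j)⁻¹ * (x - v j)) := by
    have h2 := congrArg (Polynomial.eval x) hkey
    simpa [Lagrange.interpolate_apply, Lagrange.basis, Lagrange.basisDivisor,
      Polynomial.eval_prod, Polynomial.eval_finset_sum] using h2
  have herase : ∀ k : Fin n, (univ : Finset (Fin (n+1))).erase k.succ
      = insert (0 : Fin (n+1)) ((univ.erase k).image Fin.succ) := by
    intro k
    ext j
    simp only [mem_erase, mem_univ, and_true, mem_insert, mem_image]
    constructor
    · intro hj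
      rcases Fin.eq_zero_or_eq_succ j with h0 | ⟨m, rfl⟩
      · exact Or.inl h0
      · exact Or.inr ⟨m, by simpa [Fin.succ_inj] using hj, rfl⟩
    · rintro (rfl | ⟨m, hm, rfl⟩)
      · exact (Fin.succ_ne_zero k).symm
      · simpa [Fin.succ_inj] using hm
  have key2 : x ^ n = ∑ k : Fin n, (t k) ^ n *
      ((t k)⁻¹ * x * ∏ m ∈ univ.erase k, ((t k - t m)⁻¹ * (x - t m))) := by
    rw [key, Fin.sum_univ_succ]
    simp only [hv, Fin.cons_zero, Fin.cons_succ]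
    rw [zero_pow hn.ne', zero_mul, zero_add]
    refine Finset.sum_congr rfl fun k _ => ?_
    rw [herase k, prod_insert (by simp only [mem_image]; rintro ⟨a, -, ha⟩; exact Fin.succ_ne_zero a ha),
      prod_image (fun a _ b _ h => Fin.succ_injective _ h)]
    simp only [Fin.cons_zero, Fin.cons_succ, sub_zero]
  have hA : (∏ k, (x - t k)) ≠ 0 := prod_ne_zero_iff.2 fun k _ => sub_ne_zero.2 (hx k)
  apply mul_right_cancel₀ hA
  have hR : (∏ i, x / (x - t i)) * ∏ k, (x - t k) = x ^ n := by
    rw [← prod_mul_distrib, Finset.prod_congr rfl fun k _ => div_mul_cancel₀ x (sub_ne_zero.2 (hx k)),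
      prod_const, card_univ, Fintype.card_fin]
  rw [hR, sum_mul, key2]
  refine Finset.sum_congr rfl fun k _ => ?_
  rw [← Finset.mul_prod_erase univ _ (mem_univ k), mul_assoc, ← mul_assoc (x / (x - t k)),
    div_mul_cancel₀ _ (sub_ne_zero.2 (hx k))]
  have hcard : (univ.erase k).card = n - 1 := by
    rw [card_erase_of_mem (mem_univ k), card_univ, Fintype.card_fin]
  have h2 : (∏ j ∈ univ.erase k, t k / (t k - t j))
      = t k ^ (n-1) * ∏ j ∈ univ.erase k, (t k - t j)⁻¹ := by
    simp_rw [div_eq_mul_inv]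
    rw [prod_mul_distrib, prod_const, hcard]
  have hp : t k ^ n = t k ^ (n-1) * t k := by
    rw [← pow_succ]; congr 1; omega
  have hq : t k ^ n * (t k)⁻¹ = t k ^ (n-1) := by
    rw [hp, mul_assoc, mul_inv_cancel₀ (ht k), mul_one]
  rw [h2, prod_mul_distrib, ← hq]
  ring


/-- Partial fraction identity with a square:
`∑ i (∏_{j≠i} t_i/(t_i - t_j)) · (s/(s - t_i))² =
  (1 + ∑ j t_j/(s - t_j)) · ∏ i s/(s - t_i)`
for distinct nonzero complex numbers `s, t_1, …, t_n`. -/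
theorem sum_prod_partial_fraction_sq (n : ℕ) (hn : 0 < n) (t : Fin n → ℂ) (s : ℂ)
    (ht : ∀ i, t i ≠ 0) (hs : s ≠ 0) (hinj : Function.Injective t)
    (hst : ∀ i, s ≠ t i) :
    ∑ i, (∏ j ∈ univ.erase i, t i / (t i - t j)) * (s / (s - t i)) ^ 2
      = (1 + ∑ j, t j / (s - t j)) * ∏ i, s / (s - t i) := by
  classical
  have lemA : ∀ x : ℂ, (∀ i, x ≠ t i) →
      ∑ i, (∏ j ∈ univ.erase i, t i / (t i - t j)) * (x / (x - t i))
        = ∏ i, x / (x - t i) := fun x hx =>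
    sum_prod_partial_fraction_base n hn t ht hinj x hx
  have hsub : ∀ i, s - t i ≠ 0 := fun i => sub_ne_zero.2 (hst i)
  set c : Fin n → ℂ := fun i => ∏ j ∈ univ.erase i, t i / (t i - t j) with hc
  set F : ℂ → ℂ := fun x => ∏ i, x / (x - t i) with hF
  set G : ℂ → ℂ := fun x => ∑ i, c i * (x / (x - t i)) with hG
  have hU : IsOpen {x : ℂ | ∀ i, x ≠ t i} := by
    have h1 : {x : ℂ | ∀ i, x ≠ t i} = (⋃ i, {t i})ᶜ := by
      ext x; simp [Set.mem_iUnion, eq_comm]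
    rw [h1]
    exact (isClosed_iUnion_of_finite fun i => isClosed_singleton).isOpen_compl
  have hev : G =ᶠ[nhds s] F := by
    filter_upwards [hU.mem_nhds hst] with x hx
    exact lemA x hx
  have hder : ∀ i : Fin n, HasDerivAt (fun x : ℂ => x / (x - t i)) (-(t i) / (s - t i)^2) s := by
    intro i
    have h := (hasDerivAt_id s).div ((hasDerivAt_id s).sub_const (t i)) (hsub i)
    change HasDerivAt (fun x : ℂ => x / (x - t i)) _ s at h
    convert h using 1
    simp only [id_eq]
    ring
  have hGd : HasDerivAt G (∑ i, c i * (-(t i) / (s - t i)^2)) s := by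
    have h := HasDerivAt.sum (u := univ) fun i _ => (hder i).const_mul (c i)
    rw [Finset.sum_fn] at h
    exact h
  have hFd : HasDerivAt F (∑ i, (∏ j ∈ univ.erase i, s / (s - t j)) * (-(t i) / (s - t i)^2)) s := by
    have h := HasDerivAt.finset_prod (u := univ) (f := fun (i : Fin n) (x : ℂ) => x / (x - t i))
      (f' := fun i => -(t i) / (s - t i)^2) (x := s) (fun i _ => hder i)
    rw [Finset.prod_fn] at h
    simpa only [smul_eq_mul] using h
  have hGF' : (∑ i, c i * (-(t i) / (s - t i)^2))
      = ∑ i, (∏ j ∈ univ.erase i, s / (s - t j)) * (-(t i) / (s - t i)^2) := by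
    rw [← hGd.deriv, ← hFd.deriv]
    exact hev.deriv_eq
  have hkey2 : (∑ i, c i * (t i / (s - t i)^2))
      = ∑ i, (∏ j ∈ univ.erase i, s / (s - t j)) * (t i / (s - t i)^2) := by
    have h := hGF'
    simp only [neg_div, mul_neg, Finset.sum_neg_distrib] at h
    exact neg_injective h
  have hprod_erase : ∀ i, (∏ j ∈ univ.erase i, s / (s - t j)) = F s * (s - t i) / s := by
    intro i
    have h : (s / (s - t i)) * ∏ j ∈ univ.erase i, s / (s - t j) = ∏ j, s / (s - t j) :=
      Finset.mul_prod_erase univ (fun j => s / (s - t j)) (mem_univ i)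
    have hFs' : F s = ∏ j, s / (s - t j) := rfl
    rw [hFs', ← h]
    have hone : s / (s - t i) * ((s - t i) / s) = 1 := by
      rw [div_mul_div_comm, mul_comm (s - t i) s]
      exact div_self (mul_ne_zero hs (hsub i))
    have expand : ((s / (s - t i)) * ∏ j ∈ univ.erase i, s / (s - t j)) * (s - t i) / s
        = (∏ j ∈ univ.erase i, s / (s - t j)) * (s / (s - t i) * ((s - t i) / s)) := by
      ring
    rw [expand, hone, mul_one]
  have hGFs : G s = F s := lemA s hst
  have hstep : ∀ i, c i * (s / (s - t i))^2
      = c i * (s / (s - t i)) + s * (c i * (t i / (s - t i)^2)) := by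
    intro i
    have h := hsub i
    field_simp
    ring
  calc ∑ i, c i * (s / (s - t i))^2
      = ∑ i, (c i * (s / (s - t i)) + s * (c i * (t i / (s - t i)^2))) :=
        sum_congr rfl fun i _ => hstep i
    _ = G s + s * ∑ i, c i * (t i / (s - t i)^2) := by rw [sum_add_distrib, ← mul_sum]
    _ = F s + s * ∑ i, (∏ j ∈ univ.erase i, s / (s - t j)) * (t i / (s - t i)^2) := by
        rw [hGFs, hkey2]
    _ = F s + F s * ∑ i, t i / (s - t i) := by
        rw [mul_sum, mul_sum]
        congr 1
        refine sum_congr rfl fun i _ => ?_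
        rw [hprod_erase i]
        have h1 := hsub i
        field_simp
    _ = (1 + ∑ j, t j / (s - t j)) * F s := by ring
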